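/- Let (p̲^A_i, p̄^A_i)_{i=1}^n be a good coherent probability interval on E_A = {a_1,…,a_n} with associated standard good mass m_A, and for each i = 1,…,n let numbers p̲^i_j, p̄^i_j ∈ [0,1] with p̲^i_j ≤ p̄^i_j be given (j fixed). Define p̲^B_j = Σ_{V ⊆ E_A} m_A(V) ∏_{i : a_i ∈ V} p̲^i_j. Then p̲^B_j ≤ min Σ_{i=1}^n y_i x_i, where the minimum is over all x_i ∈ [p̲^A_i, p̄^A_i] with Σ_{i=1}^n x_i = 1 and all y_i ∈ [p̲^i_j, p̄^i_j]. -/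
import Mathlib


open Finset

/-- A Dempster–Shafer mass function on the finite type `α`:
nonnegative, at most one, vanishing on `∅`, and summing to one. -/
def IsMass {α : Type*} [Fintype α] [DecidableEq α] (m : Finset α → ℝ) : Prop :=
  m ∅ = 0 ∧ (∀ V : Finset α, 0 ≤ m V ∧ m V ≤ 1) ∧ (∑ V : Finset α, m V) = 1

/-- The belief function associated to a mass function: `Bel m W = ∑_{V ⊆ W} m V`. -/
def Bel {α : Type*} [Fintype α] [DecidableEq α] (m : Finset α → ℝ) (W : Finset α) : ℝ :=
  ∑ V ∈ Finset.univ.filter (fun V : Finset α => V ⊆ W), m V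

/-- The plausibility function associated to a mass function:
`Pl m W = ∑_{V ∩ W ≠ ∅} m V`. -/
def Pl {α : Type*} [Fintype α] [DecidableEq α] (m : Finset α → ℝ) (W : Finset α) : ℝ :=
  ∑ V ∈ Finset.univ.filter (fun V : Finset α => (V ∩ W).Nonempty), m V

/-- A coherent probability interval `(lo i, hi i)_{i}` on `Fin n`:
componentwise bounds `0 ≤ lo ≤ hi ≤ 1`, together with [Coh1], [Coh2], [Coh3]. -/
def IsCoherent {n : ℕ} (lo hi : Fin n → ℝ) : Prop :=
  (∀ i, 0 ≤ lo i ∧ lo i ≤ hi i ∧ hi i ≤ 1) ∧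
  (∑ i, lo i) ≤ 1 ∧ 1 ≤ (∑ i, hi i) ∧
  (∀ i, 1 - ∑ h ∈ Finset.univ.erase i, hi h ≤ lo i) ∧
  (∀ i, hi i ≤ 1 - ∑ h ∈ Finset.univ.erase i, lo h)

/-- `Δ = S̄ + (n-2)S̲ - (n-1)` for a probability interval. -/
def intervalDelta {n : ℕ} (lo hi : Fin n → ℝ) : ℝ :=
  (∑ i, hi i) + ((n : ℝ) - 2) * (∑ i, lo i) - ((n : ℝ) - 1)

/-- A *good* coherent probability interval: coherent and `Δ ≥ 0`. -/
def IsGood {n : ℕ} (lo hi : Fin n → ℝ) : Prop :=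
  IsCoherent lo hi ∧ 0 ≤ intervalDelta lo hi

/-- The standard good mass (SGM) associated to a (good coherent) probability interval:
mass `lo i` on each singleton `{a_i}`, mass `1 - hi i - ∑_{h ≠ i} lo h` on each
complement `univ ∖ {a_i}`, mass `Δ` on `univ`, and `0` on every other set. -/
def SGM {n : ℕ} (lo hi : Fin n → ℝ) (V : Finset (Fin n)) : ℝ :=
  (∑ i ∈ Finset.univ.filter (fun i : Fin n => V = {i}), lo i)
  + (∑ i ∈ Finset.univ.filter (fun i : Fin n => V = Finset.univ \ {i}),
      (1 - hi i - ∑ h ∈ Finset.univ.erase i, lo h))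
  + (if V = Finset.univ then intervalDelta lo hi else 0)


lemma piece_sum {n : ℕ} (c : Fin n → ℝ) (b : Fin n → Finset (Fin n)) (g : Finset (Fin n) → ℝ) :
    ∑ V : Finset (Fin n), (∑ i ∈ Finset.univ.filter (fun i : Fin n => V = b i), c i) * g V
      = ∑ i, c i * g (b i) := by
  calc ∑ V : Finset (Fin n), (∑ i ∈ Finset.univ.filter (fun i : Fin n => V = b i), c i) * g V
      = ∑ V : Finset (Fin n), ∑ i, (if V = b i then c i * g V else 0) := by
        refine Finset.sum_congr rfl fun V _ => ?_
        rw [Finset.sum_filter, Finset.sum_mul]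
        exact Finset.sum_congr rfl fun i _ => by split <;> simp
    _ = ∑ i, ∑ V : Finset (Fin n), (if V = b i then c i * g V else 0) := Finset.sum_comm
    _ = ∑ i, c i * g (b i) := by
        refine Finset.sum_congr rfl fun i _ => ?_
        rw [Finset.sum_ite_eq' Finset.univ (b i) (fun V => c i * g V)]
        simp

lemma SGM_sum_mul {n : ℕ} (loA hiA : Fin n → ℝ) (g : Finset (Fin n) → ℝ) :
    ∑ V : Finset (Fin n), SGM loA hiA V * g V
      = (∑ i, loA i * g {i})
        + (∑ i, (1 - hiA i - ∑ h ∈ Finset.univ.erase i, loA h) * g (Finset.univ \ {i}))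
        + intervalDelta loA hiA * g Finset.univ := by
  unfold SGM
  simp only [add_mul, Finset.sum_add_distrib]
  congr 1
  · congr 1
    · exact piece_sum loA (fun i => {i}) g
    · exact piece_sum _ (fun i => Finset.univ \ {i}) g
  · simp [ite_mul]

/-- Let `(loA, hiA)` be a good coherent probability interval on
`E_A = Fin n` with standard good mass `mA = SGM loA hiA`, and for a fixed `j` let
`lo i ≤ hi i` in `[0,1]` be conditional bounds. Then
`p̲ᴮⱼ = ∑_{V ⊆ E_A} mA(V) ∏_{i ∈ V} lo i` is below `∑ᵢ yᵢ xᵢ` for every choice of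
`xᵢ ∈ [loA i, hiA i]` with `∑ᵢ xᵢ = 1` and `yᵢ ∈ [lo i, hi i]`; that is, it is a
lower bound on the credal minimum. -/
theorem sgm_lower_is_credal_lower_bound (n : ℕ) (loA hiA : Fin n → ℝ)
    (hA : IsGood loA hiA)
    (lo hi : Fin n → ℝ) (hbd : ∀ i, 0 ≤ lo i ∧ lo i ≤ hi i ∧ hi i ≤ 1)
    (x : Fin n → ℝ) (hx : ∀ i, loA i ≤ x i ∧ x i ≤ hiA i) (hxs : (∑ i, x i) = 1)
    (y : Fin n → ℝ) (hy : ∀ i, lo i ≤ y i ∧ y i ≤ hi i) :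
    (∑ V : Finset (Fin n), SGM loA hiA V * ∏ i ∈ V, lo i) ≤ ∑ i, y i * x i := by
  obtain ⟨⟨hbdA, hS1, hS2, hCoh2, hCoh3⟩, hΔ⟩ := hA
  rcases Nat.eq_zero_or_pos n with h0 | hn
  · exfalso; subst h0; simp at hxs
  -- basic positivity facts
  have hlo0 : ∀ i, 0 ≤ lo i := fun i => (hbd i).1
  have hlo1 : ∀ i, lo i ≤ 1 := fun i => le_trans (hbd i).2.1 (hbd i).2.2
  have hx0 : ∀ i, 0 ≤ x i := fun i => le_trans (hbdA i).1 (hx i).1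
  set c : Fin n → ℝ := fun i => 1 - hiA i - ∑ h ∈ Finset.univ.erase i, loA h with hc
  set d : Fin n → ℝ := fun i => x i - loA i with hd
  have hcnn : ∀ i, 0 ≤ c i := by intro i; have := hCoh3 i; simp only [hc]; linarith
  have hdnn : ∀ i, 0 ≤ d i := by intro i; have := (hx i).1; simp only [hd]; linarith
  have prod_le : ∀ (s : Finset (Fin n)), ∀ i ∈ s, (∏ h ∈ s, lo h) ≤ lo i := by
    intro s i hi
    rw [← Finset.mul_prod_erase s lo hi]
    have h1 : ∏ h ∈ s.erase i, lo h ≤ 1 :=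
      Finset.prod_le_one (fun h _ => hlo0 h) (fun h _ => hlo1 h)
    have h2 : 0 ≤ ∏ h ∈ s.erase i, lo h := Finset.prod_nonneg (fun h _ => hlo0 h)
    nlinarith [hlo0 i]
  -- minimizer of lo
  obtain ⟨k, -, hk⟩ := Finset.exists_min_image Finset.univ lo
    ⟨⟨0, hn⟩, Finset.mem_univ _⟩
  have hk' : ∀ i, lo k ≤ lo i := fun i => hk i (Finset.mem_univ i)
  -- abbreviations
  set Δ : ℝ := intervalDelta loA hiA with hΔdef
  set P : ℝ := ∏ i, lo i with hP
  set Pi : Fin n → ℝ := fun i => ∏ h ∈ Finset.univ \ {i}, lo h with hPi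
  have hPk_le : ∀ i ∈ Finset.univ.erase k, Pi k ≤ lo i := by
    intro i hi
    refine prod_le _ i ?_
    simp [Finset.mem_erase.1 hi |>.1]
  have hPi_le : ∀ i ∈ Finset.univ.erase k, Pi i ≤ lo k := by
    intro i hi
    refine prod_le _ k ?_
    have : i ≠ k := (Finset.mem_erase.1 hi).1
    simp [this.symm]
  have hP_le : P ≤ lo k := prod_le _ k (Finset.mem_univ k)
  -- sum identities
  have herased : ∑ i ∈ Finset.univ.erase k, d i = (∑ i, d i) - d k :=
    Finset.sum_erase_eq_sub (Finset.mem_univ k)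
  have herasec : ∑ i ∈ Finset.univ.erase k, c i = (∑ i, c i) - c k :=
    Finset.sum_erase_eq_sub (Finset.mem_univ k)
  have hsumd : ∑ i, d i = 1 - ∑ i, loA i := by
    simp only [hd, Finset.sum_sub_distrib, hxs]
  have hsumc : ∑ i, c i = (n : ℝ) - (∑ i, hiA i) - ((n : ℝ) - 1) * (∑ i, loA i) := by
    have : ∀ i : Fin n, c i = 1 - hiA i - ((∑ h, loA h) - loA i) := by
      intro i
      simp only [hc, Finset.sum_erase_eq_sub (Finset.mem_univ i)]
    rw [Finset.sum_congr rfl fun i _ => this i]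
    simp [Finset.sum_sub_distrib, Finset.sum_add_distrib, Finset.card_univ, mul_comm]
    ring
  have hck : c k ≤ ∑ i ∈ Finset.univ.erase k, d i := by
    rw [herased, hsumd]
    have h1 : c k = 1 - hiA k - ((∑ h, loA h) - loA k) := by
      simp only [hc, Finset.sum_erase_eq_sub (Finset.mem_univ k)]
    have h2 := (hx k).2
    simp only [hd] at *
    linarith
  -- the key inequality for c k * Pi k
  have hkey : c k * Pi k ≤ c k * lo k + ∑ i ∈ Finset.univ.erase k, (d i * lo i - d i * lo k) := by
    rcases le_or_gt (lo k) (Pi k) with h | h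
    · have step1 : c k * (Pi k - lo k) ≤ (∑ i ∈ Finset.univ.erase k, d i) * (Pi k - lo k) :=
        mul_le_mul_of_nonneg_right hck (by linarith)
      have step2 : (∑ i ∈ Finset.univ.erase k, d i) * (Pi k - lo k)
          ≤ ∑ i ∈ Finset.univ.erase k, (d i * lo i - d i * lo k) := by
        rw [Finset.sum_mul]
        refine Finset.sum_le_sum fun i hi => ?_
        have h1 := hPk_le i hi
        have h2 := hdnn i
        nlinarith
      nlinarith
    · have h1 : c k * Pi k ≤ c k * lo k := mul_le_mul_of_nonneg_left h.le (hcnn k)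
      have h2 : 0 ≤ ∑ i ∈ Finset.univ.erase k, (d i * lo i - d i * lo k) := by
        refine Finset.sum_nonneg fun i _ => ?_
        have := hk' i; have := hdnn i; nlinarith
      linarith
  -- core inequality
  have hcore : (∑ i, c i * Pi i) + Δ * P ≤ ∑ i, d i * lo i := by
    have hsplitC : ∑ i, c i * Pi i = c k * Pi k + ∑ i ∈ Finset.univ.erase k, c i * Pi i :=
      (Finset.add_sum_erase _ _ (Finset.mem_univ k)).symm
    have hsplitD : ∑ i, d i * lo i = d k * lo k + ∑ i ∈ Finset.univ.erase k, d i * lo i :=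
      (Finset.add_sum_erase _ _ (Finset.mem_univ k)).symm
    have h2 : ∑ i ∈ Finset.univ.erase k, c i * Pi i
        ≤ (∑ i ∈ Finset.univ.erase k, c i) * lo k := by
      rw [Finset.sum_mul]
      exact Finset.sum_le_sum fun i hi => mul_le_mul_of_nonneg_left (hPi_le i hi) (hcnn i)
    have h3 : Δ * P ≤ Δ * lo k := mul_le_mul_of_nonneg_left hP_le hΔ
    have h5 : ∑ i ∈ Finset.univ.erase k, (d i * lo i - d i * lo k)
        = (∑ i ∈ Finset.univ.erase k, d i * lo i)
          - (∑ i ∈ Finset.univ.erase k, d i) * lo k := by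
      rw [Finset.sum_sub_distrib, Finset.sum_mul]
    have h6 : (∑ i, c i) + Δ = ∑ i, d i := by
      rw [hsumc, hsumd, hΔdef]; simp only [intervalDelta]; ring
    have h7 : ((∑ i, c i) + Δ) * lo k = (∑ i, d i) * lo k := by rw [h6]
    have h8 : ((∑ i, c i) - c k) * lo k = (∑ i, c i) * lo k - c k * lo k := by ring
    have h9 : ((∑ i, d i) - d k) * lo k = (∑ i, d i) * lo k - d k * lo k := by ring
    rw [hsplitC, hsplitD]
    rw [herasec] at h2
    rw [h5, herased] at hkey
    nlinarith [hkey, h2, h3, h7, h8, h9]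
  -- assemble
  have hmain := SGM_sum_mul loA hiA (fun V => ∏ i ∈ V, lo i)
  calc (∑ V : Finset (Fin n), SGM loA hiA V * ∏ i ∈ V, lo i)
      = (∑ i, loA i * lo i) + ((∑ i, c i * Pi i) + Δ * P) := by
        rw [hmain]
        simp only [Finset.prod_singleton]
        rw [add_assoc]
    _ ≤ (∑ i, loA i * lo i) + ∑ i, d i * lo i := by linarith [hcore]
    _ = ∑ i, lo i * x i := by
        rw [← Finset.sum_add_distrib]
        refine Finset.sum_congr rfl fun i _ => ?_
        simp only [hd]; ring
    _ ≤ ∑ i, y i * x i := by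
        refine Finset.sum_le_sum fun i _ => ?_
        exact mul_le_mul_of_nonneg_right (hy i).1 (hx0 i)
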